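/- For every integer k ≥ 1, the kernel of the differential D: C_{k−1}^{(k)} → C_{k−2}^{(k)} is a free abelian group of rank Σ_{j=0}^{k} (−1)^j · k!/j!; equivalently, its rank equals the number of derangements of [k]. (Since C_k^{(k)} = 0, this kernel is the top reduced homology group of the complex of injective words on [k].) -/

import Mathlib

noncomputable section

/-- The free associative `R`-algebra on noncommuting generators labelled by `Fin k`,
realized as the monoid algebra on the free monoid. -/
abbrev FA (R : Type) [CommRing R] (k : ℕ) : Type := MonoidAlgebra R (FreeMonoid (Fin k))

/-- A word in the letters `Fin k`, as an element of the free associative algebra. -/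
def wordElem (R : Type) [CommRing R] (k : ℕ) (w : List (Fin k)) : FA R k :=
  MonoidAlgebra.single (FreeMonoid.ofList w) 1

/-- `C_{n-1}^{(k)}`: the free `R`-submodule spanned by the injective words of length `n`. -/
def wordsLen (R : Type) [CommRing R] (k n : ℕ) : Submodule R (FA R k) :=
  Submodule.span R {x | ∃ w : List (Fin k), w.Nodup ∧ w.length = n ∧ x = wordElem R k w}

/-- Alternating sum of letter deletions of a single word. -/
def Dword (R : Type) [CommRing R] (k : ℕ) (w : List (Fin k)) : FA R k :=
  ∑ j : Fin w.length, ((-1 : R) ^ (j : ℕ)) • wordElem R k (w.eraseIdx (j : ℕ))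

/-- The differential `D`, extended linearly to the whole free algebra. -/
def Ddiff (R : Type) [CommRing R] (k : ℕ) : FA R k →ₗ[R] FA R k :=
  (Finsupp.lsum R fun w : FreeMonoid (Fin k) =>
    LinearMap.toSpanSingleton R (FA R k) (Dword R k (FreeMonoid.toList w)))
    ∘ₗ (MonoidAlgebra.coeffLinearEquiv R).toLinearMap

/-! ### Finsupp model of the algebra -/

abbrev FA' (k : ℕ) : Type := FreeMonoid (Fin k) →₀ ℤ

def wordElem' (k : ℕ) (w : List (Fin k)) : FA' k := Finsupp.single (FreeMonoid.ofList w) 1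

def wordsLen' (k n : ℕ) : Submodule ℤ (FA' k) :=
  Submodule.span ℤ {x | ∃ w : List (Fin k), w.Nodup ∧ w.length = n ∧ x = wordElem' k w}

def Dword' (k : ℕ) (w : List (Fin k)) : FA' k :=
  ∑ j : Fin w.length, ((-1 : ℤ) ^ (j : ℕ)) • wordElem' k (w.eraseIdx (j : ℕ))

def Ddiff' (k : ℕ) : FA' k →ₗ[ℤ] FA' k :=
  Finsupp.lsum ℤ fun w : FreeMonoid (Fin k) =>
    LinearMap.toSpanSingleton ℤ (FA' k) (Dword' k (FreeMonoid.toList w))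

namespace InjWords

variable {k : ℕ}

lemma Ddiff_single (w : FreeMonoid (Fin k)) (r : ℤ) :
    Ddiff' k (Finsupp.single w r) = r • Dword' k (FreeMonoid.toList w) := by
  rw [Ddiff']
  erw [Finsupp.lsum_single, LinearMap.toSpanSingleton_apply]

lemma Dword_eq_sum_range (l : List (Fin k)) :
    Dword' k l = ∑ j ∈ Finset.range l.length, ((-1 : ℤ) ^ j) • wordElem' k (l.eraseIdx j) := by
  rw [Dword', Fin.sum_univ_eq_sum_range (fun j => ((-1 : ℤ) ^ j) • wordElem' k (l.eraseIdx j))]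

/-- prepend a letter, as a linear map -/
def pre (a : Fin k) : FA' k →ₗ[ℤ] FA' k :=
  Finsupp.lmapDomain ℤ ℤ (fun w => FreeMonoid.ofList (a :: FreeMonoid.toList w))

lemma pre_single (a : Fin k) (w : FreeMonoid (Fin k)) (r : ℤ) :
    pre a (Finsupp.single w r)
      = Finsupp.single (FreeMonoid.ofList (a :: FreeMonoid.toList w)) r := by
  rw [pre]
  erw [Finsupp.lmapDomain_apply, Finsupp.mapDomain_single]

lemma pre_wordElem (a : Fin k) (l : List (Fin k)) :
    pre a (wordElem' k l) = wordElem' k (a :: l) := by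
  rw [wordElem', wordElem', pre_single]
  simp

lemma Dword_cons (a : Fin k) (l : List (Fin k)) :
    Dword' k (a :: l) = wordElem' k l - pre a (Dword' k l) := by
  rw [Dword_eq_sum_range, Dword_eq_sum_range]
  rw [show (a :: l).length = l.length + 1 from rfl, Finset.sum_range_succ']
  have h1 : ∀ j ∈ Finset.range l.length,
      ((-1 : ℤ) ^ (j+1)) • wordElem' k ((a :: l).eraseIdx (j+1))
        = -(((-1 : ℤ) ^ j) • pre a (wordElem' k (l.eraseIdx j))) := by
    intro j _
    rw [List.eraseIdx_cons_succ, pre_wordElem, pow_succ]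
    rw [mul_comm, neg_one_mul, neg_smul]
  rw [Finset.sum_congr rfl h1]
  have h2 : ∑ x ∈ Finset.range l.length, (-1:ℤ) ^ x • (pre a) (wordElem' k (l.eraseIdx x))
       = pre a (∑ j ∈ Finset.range l.length, (-1:ℤ)^j • wordElem' k (l.eraseIdx j)) := by
    rw [map_sum]
    exact Finset.sum_congr rfl (fun j _ => (map_smul _ _ _).symm)
  simp only [Finset.sum_neg_distrib, List.eraseIdx_cons_zero, pow_zero, one_smul]
  rw [h2]
  abel

lemma eraseIdx_comm (l : List (Fin k)) : ∀ i j : ℕ, i ≤ j →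
    (l.eraseIdx (j+1)).eraseIdx i = (l.eraseIdx i).eraseIdx j := by
  induction l with
  | nil => intro i j _; simp [List.eraseIdx]
  | cons a t ih =>
    intro i j hij
    cases i with
    | zero => simp [List.eraseIdx_cons_succ, List.eraseIdx_cons_zero]
    | succ i' =>
      cases j with
      | zero => omega
      | succ j' =>
        simp only [List.eraseIdx_cons_succ]
        rw [ih i' j' (by omega)]

lemma Ddiff_Dword (l : List (Fin k)) : Ddiff' k (Dword' k l) = 0 := by
  rw [Dword_eq_sum_range, map_sum]
  have h1 : ∀ j, Ddiff' k (((-1 : ℤ) ^ j) • wordElem' k (l.eraseIdx j))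
      = ((-1 : ℤ) ^ j) • Dword' k (l.eraseIdx j) := by
    intro j
    rw [map_smul, wordElem', Ddiff_single]
    simp
  simp only [h1]
  simp only [Dword_eq_sum_range, Finset.smul_sum]
  set n := l.length with hn
  have hlen : ∀ j ∈ Finset.range n, (l.eraseIdx j).length = n - 1 := by
    intro j hj
    have := Finset.mem_range.mp hj
    rw [List.length_eraseIdx]
    split_ifs <;> omega
  rw [Finset.sum_congr rfl (fun j hj => by rw [hlen j hj] :
    ∀ j ∈ Finset.range n, (∑ i ∈ Finset.range (l.eraseIdx j).length,
        (-1:ℤ)^j • ((-1:ℤ)^i • wordElem' k ((l.eraseIdx j).eraseIdx i)))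
      = ∑ i ∈ Finset.range (n-1), (-1:ℤ)^j • ((-1:ℤ)^i • wordElem' k ((l.eraseIdx j).eraseIdx i)))]
  rw [← Finset.sum_product']
  have hkey : ∀ m : ℕ, ((-1:ℤ))^(m+1) + ((-1:ℤ))^m = 0 := fun m => by rw [pow_succ]; ring
  have hkey2 : ∀ m : ℕ, ((-1:ℤ))^m + ((-1:ℤ))^(m+1) = 0 := fun m => by rw [pow_succ]; ring
  refine Finset.sum_involution
    (fun p _ => if p.2 < p.1 then (p.2, p.1 - 1) else (p.2 + 1, p.1)) ?_ ?_ ?_ ?_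
  · intro p hp
    simp only [Finset.mem_product, Finset.mem_range] at hp
    by_cases hc : p.2 < p.1
    · simp only [hc, if_pos]
      obtain ⟨j', hj'⟩ : ∃ j', p.1 = j'+1 := ⟨p.1-1, by omega⟩
      rw [hj', Nat.add_sub_cancel]
      have hword : (l.eraseIdx (j'+1)).eraseIdx p.2 = (l.eraseIdx p.2).eraseIdx j' :=
        eraseIdx_comm l p.2 j' (by omega)
      rw [hword, smul_smul, smul_smul, ← pow_add, ← pow_add, ← add_smul,
        show j' + 1 + p.2 = (p.2 + j') + 1 by omega, hkey, zero_smul]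
    · simp only [hc, if_neg, not_false_iff]
      have hword : (l.eraseIdx (p.2+1)).eraseIdx p.1 = (l.eraseIdx p.1).eraseIdx p.2 :=
        eraseIdx_comm l p.1 p.2 (by omega)
      rw [← hword, smul_smul, smul_smul, ← pow_add, ← pow_add, ← add_smul,
        show p.1 + p.2 = p.2 + p.1 by omega,
        show p.2 + 1 + p.1 = (p.2 + p.1) + 1 by omega, hkey2, zero_smul]
  · intro p hp h
    by_cases hc : p.2 < p.1 <;> simp only [hc, if_pos, if_neg, not_false_iff] <;>
      intro hcon <;> rw [Prod.ext_iff] at hcon <;> simp only [Prod.fst, Prod.snd] at hcon <;> omega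
  · intro p hp
    simp only [Finset.mem_product, Finset.mem_range] at hp ⊢
    by_cases hc : p.2 < p.1 <;> simp only [hc, if_pos, if_neg, not_false_iff] <;>
      exact ⟨by omega, by omega⟩
  · intro p hp
    simp only [Finset.mem_product, Finset.mem_range] at hp
    by_cases hc : p.2 < p.1
    · have h2 : ¬ (p.1 - 1 < p.2) := by omega
      simp only [hc, if_pos, h2, if_neg, not_false_iff]
      have h3 : p.1 - 1 + 1 = p.1 := by omega
      rw [h3]
    · have h2 : p.1 < p.2 + 1 := by omega
      simp only [hc, if_neg, not_false_iff, h2, if_pos]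
      have h3 : p.2 + 1 - 1 = p.2 := by omega
      rw [h3]

end InjWords

/-! ### Filter machinery -/

abbrev sup {k : ℕ} (s : Set (FreeMonoid (Fin k))) : Submodule ℤ (FA' k) :=
  Finsupp.supported ℤ ℤ s

open Classical in
def flt {k : ℕ} (p : FreeMonoid (Fin k) → Prop) : FA' k →ₗ[ℤ] FA' k :=
  Finsupp.lsum ℤ fun w => if p w then (Finsupp.lsingle w : ℤ →ₗ[ℤ] FA' k) else 0

namespace InjWords2

variable {k : ℕ}

open Classical in
lemma flt_single (p : FreeMonoid (Fin k) → Prop) (w : FreeMonoid (Fin k)) (r : ℤ) :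
    flt p (Finsupp.single w r) = if p w then Finsupp.single w r else 0 := by
  rw [flt]
  erw [Finsupp.lsum_single]
  by_cases h : p w <;> simp [h]

lemma supported_le_comap {s t : Set (FreeMonoid (Fin k))} (f : FA' k →ₗ[ℤ] FA' k)
    (h : ∀ w ∈ s, f (Finsupp.single w 1) ∈ sup t) :
    ∀ x ∈ sup s, f x ∈ sup t := by
  intro x hx
  rw [sup, Finsupp.supported_eq_span_single] at hx
  have hle : Submodule.span ℤ ((fun i => (Finsupp.single i 1 : FA' k)) '' s)
      ≤ (sup t).comap f := by
    rw [Submodule.span_le]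
    rintro y ⟨w, hw, rfl⟩
    exact h w hw
  exact hle hx

lemma eq_on_supported {s : Set (FreeMonoid (Fin k))} (f g : FA' k →ₗ[ℤ] FA' k)
    (h : ∀ w ∈ s, f (Finsupp.single w 1) = g (Finsupp.single w 1)) :
    ∀ x ∈ sup s, f x = g x := by
  intro x hx
  rw [sup, Finsupp.supported_eq_span_single] at hx
  have hle : Submodule.span ℤ ((fun i => (Finsupp.single i 1 : FA' k)) '' s)
      ≤ LinearMap.eqLocus f g := by
    rw [Submodule.span_le]
    rintro y ⟨w, hw, rfl⟩
    exact h w hw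
  exact hle hx

lemma flt_congr {p q : FreeMonoid (Fin k) → Prop} (h : ∀ w, p w ↔ q w) :
    (flt p : FA' k →ₗ[ℤ] FA' k) = flt q := by
  apply Finsupp.lhom_ext
  intro w r
  erw [flt_single, flt_single]
  by_cases hw : p w
  · rw [if_pos hw, if_pos ((h w).mp hw)]
  · rw [if_neg hw, if_neg (fun hq => hw ((h w).mpr hq))]

lemma flt_mem_inter {s : Set (FreeMonoid (Fin k))} (p : FreeMonoid (Fin k) → Prop) {x : FA' k}
    (hx : x ∈ sup s) : flt p x ∈ sup (s ∩ {w | p w}) := by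
  refine supported_le_comap (flt p) ?_ x hx
  intro w hw
  erw [flt_single]
  by_cases h : p w
  · rw [if_pos h]
    exact Finsupp.single_mem_supported ℤ 1 ⟨hw, h⟩
  · rw [if_neg h]
    exact Submodule.zero_mem _

lemma flt_mem' (p : FreeMonoid (Fin k) → Prop) (x : FA' k) : flt p x ∈ sup {w | p w} := by
  have h1 : x ∈ sup (Set.univ : Set (FreeMonoid (Fin k))) := by
    rw [sup, Finsupp.supported_univ]; exact Submodule.mem_top
  have := flt_mem_inter p h1
  exact Finsupp.supported_mono (by simp) this

lemma flt_id_of {s : Set (FreeMonoid (Fin k))} {p : FreeMonoid (Fin k) → Prop} {x : FA' k}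
    (hx : x ∈ sup s) (h : ∀ w ∈ s, p w) : flt p x = x := by
  refine eq_on_supported (flt p) LinearMap.id ?_ x hx
  intro w hw
  erw [flt_single, if_pos (h w hw)]
  rfl

lemma flt_zero_of {s : Set (FreeMonoid (Fin k))} {p : FreeMonoid (Fin k) → Prop} {x : FA' k}
    (hx : x ∈ sup s) (h : ∀ w ∈ s, ¬ p w) : flt p x = 0 := by
  refine eq_on_supported (flt p) 0 ?_ x hx
  intro w hw
  erw [flt_single, if_neg (h w hw)]
  rfl

lemma flt_add_not (p : FreeMonoid (Fin k) → Prop) (x : FA' k) :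
    flt p x + flt (fun w => ¬ p w) x = x := by
  have h : (flt p + flt (fun w => ¬ p w) : FA' k →ₗ[ℤ] FA' k) = LinearMap.id := by
    apply Finsupp.lhom_ext
    intro w r
    erw [LinearMap.add_apply, flt_single, flt_single]
    by_cases hw : p w
    · rw [if_pos hw, if_neg (not_not_intro hw)]; rw [add_zero]; rfl
    · rw [if_neg hw, if_pos hw]; rw [zero_add]; rfl
  calc flt p x + flt (fun w => ¬ p w) x = (flt p + flt (fun w => ¬ p w)) x := rfl
  _ = x := by rw [h]; rfl

lemma flt_flt (p q : FreeMonoid (Fin k) → Prop) (x : FA' k) :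
    flt p (flt q x) = flt (fun w => p w ∧ q w) x := by
  have h : (flt p ∘ₗ flt q : FA' k →ₗ[ℤ] FA' k) = flt (fun w => p w ∧ q w) := by
    apply Finsupp.lhom_ext
    intro w r
    erw [LinearMap.comp_apply, flt_single, flt_single]
    by_cases hq : q w
    · erw [if_pos hq, flt_single]
      by_cases hp : p w
      · rw [if_pos hp, if_pos ⟨hp, hq⟩]
      · rw [if_neg hp, if_neg (fun hc => hp hc.1)]
    · rw [if_neg hq, if_neg (fun hc => hq hc.2), map_zero]
  calc flt p (flt q x) = (flt p ∘ₗ flt q) x := rfl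
  _ = flt (fun w => p w ∧ q w) x := by rw [h]

end InjWords2

/-! ### Sets of words and the relative differential -/

def InjLen (k n : ℕ) : Set (FreeMonoid (Fin k)) :=
  {w | (FreeMonoid.toList w).Nodup ∧ (FreeMonoid.toList w).length = n}

def ContP {k : ℕ} (S : Finset (Fin k)) : FreeMonoid (Fin k) → Prop :=
  fun w => ∀ a ∈ S, a ∈ FreeMonoid.toList w

def TS (k n : ℕ) (S : Finset (Fin k)) : Set (FreeMonoid (Fin k)) :=
  InjLen k n ∩ {w | ContP S w}

def DS {k : ℕ} (S : Finset (Fin k)) : FA' k →ₗ[ℤ] FA' k :=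
  flt (ContP S) ∘ₗ Ddiff' k

namespace InjWords3

open InjWords InjWords2

variable {k : ℕ}

lemma Ddiff_single_one (w : FreeMonoid (Fin k)) :
    Ddiff' k (Finsupp.single w 1) = Dword' k (FreeMonoid.toList w) := by
  rw [Ddiff_single, one_smul]

lemma wordElem_eq_single (l : List (Fin k)) :
    wordElem' k l = Finsupp.single (FreeMonoid.ofList l) 1 := rfl

/-- The letters of `Dword l` terms are sublists of `l`. -/
lemma Dword_mem_of (l : List (Fin k)) {t : Set (FreeMonoid (Fin k))}
    (h : ∀ j < l.length, FreeMonoid.ofList (l.eraseIdx j) ∈ t) :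
    Dword' k l ∈ sup t := by
  rw [Dword_eq_sum_range]
  refine Submodule.sum_mem _ ?_
  intro j hj
  refine Submodule.smul_mem _ _ ?_
  rw [wordElem_eq_single]
  exact Finsupp.single_mem_supported ℤ 1 (h j (Finset.mem_range.mp hj))

lemma Ddiff_mem {n : ℕ} {x : FA' k} (hx : x ∈ sup (InjLen k (n+1))) :
    Ddiff' k x ∈ sup (InjLen k n) := by
  refine supported_le_comap (Ddiff' k) ?_ x hx
  intro w hw
  rw [Ddiff_single_one]
  refine Dword_mem_of _ ?_
  intro j hj
  obtain ⟨hnd, hlen⟩ := hw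
  constructor
  · simp only [FreeMonoid.toList_ofList]
    exact hnd.eraseIdx j
  · simp only [FreeMonoid.toList_ofList]
    rw [List.length_eraseIdx, if_pos hj, hlen]
    omega

lemma Ddiff_afree {a : Fin k} {x : FA' k}
    (hx : x ∈ sup {w | a ∉ FreeMonoid.toList w}) :
    Ddiff' k x ∈ sup {w | a ∉ FreeMonoid.toList w} := by
  refine supported_le_comap (Ddiff' k) ?_ x hx
  intro w hw
  rw [Ddiff_single_one]
  refine Dword_mem_of _ ?_
  intro j hj hmem
  simp only [FreeMonoid.toList_ofList] at hmem
  exact hw ((List.eraseIdx_sublist _ j).mem hmem)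

lemma Ddiff_ncont {S : Finset (Fin k)} {x : FA' k}
    (hx : x ∈ sup {w | ¬ ContP S w}) :
    Ddiff' k x ∈ sup {w | ¬ ContP S w} := by
  refine supported_le_comap (Ddiff' k) ?_ x hx
  intro w hw
  rw [Ddiff_single_one]
  refine Dword_mem_of _ ?_
  intro j hj hmem
  apply hw
  intro b hb
  have := hmem b hb
  simp only [FreeMonoid.toList_ofList] at this
  exact (List.eraseIdx_sublist _ j).mem this

lemma flt_cont_D_zero {S : Finset (Fin k)} {x : FA' k}
    (hx : x ∈ sup {w | ¬ ContP S w}) : flt (ContP S) (Ddiff' k x) = 0 :=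
  flt_zero_of (Ddiff_ncont hx) (fun _ hw => hw)

lemma Ddiff_Ddiff (x : FA' k) : Ddiff' k (Ddiff' k x) = 0 := by
  induction x using Finsupp.induction_linear with
  | zero => simp
  | add f g hf hg => rw [map_add, map_add, hf, hg, add_zero]
  | single w r => rw [Ddiff_single, map_smul, Ddiff_Dword, smul_zero]

lemma DS_apply {S : Finset (Fin k)} (x : FA' k) :
    DS S x = flt (ContP S) (Ddiff' k x) := rfl

lemma DS_DS {S : Finset (Fin k)} (x : FA' k) : DS S (DS S x) = 0 := by
  rw [DS_apply, DS_apply]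
  have hsplit := flt_add_not (ContP S) (Ddiff' k x)
  have h1 : Ddiff' k (flt (ContP S) (Ddiff' k x))
      = - Ddiff' k (flt (fun w => ¬ ContP S w) (Ddiff' k x)) := by
    have := congrArg (Ddiff' k) hsplit
    rw [map_add, Ddiff_Ddiff] at this
    exact eq_neg_of_add_eq_zero_left this
  rw [h1, map_neg, flt_cont_D_zero (flt_mem' _ _), neg_zero]

end InjWords3

namespace InjWords4

open InjWords InjWords2 InjWords3

variable {k : ℕ}

lemma Ddiff_pre (a : Fin k) (x : FA' k) :
    Ddiff' k (pre a x) = x - pre a (Ddiff' k x) := by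
  induction x using Finsupp.induction_linear with
  | zero => simp
  | add f g hf hg => simp only [map_add, hf, hg]; rw [sub_add_sub_comm]
  | single w r =>
    erw [pre_single, Ddiff_single, Ddiff_single]
    simp only [FreeMonoid.toList_ofList]
    rw [Dword_cons, smul_sub, map_smul]
    congr 1
    rw [wordElem_eq_single, FreeMonoid.ofList_toList]
    rw [Finsupp.smul_single, smul_eq_mul, mul_one]

lemma flt_pre_comm {a : Fin k} {S : Finset (Fin k)} (haS : a ∉ S) (x : FA' k) :
    flt (ContP S) (pre a x) = pre a (flt (ContP S) x) := by
  induction x using Finsupp.induction_linear with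
  | zero => simp
  | add f g hf hg => simp only [map_add, hf, hg]
  | single w r =>
    have hiff : ContP S (FreeMonoid.ofList (a :: FreeMonoid.toList w)) ↔ ContP S w := by
      constructor
      · intro h b hb
        have h2 := h b hb
        simp only [FreeMonoid.toList_ofList] at h2
        rcases List.mem_cons.mp h2 with rfl | h3
        · exact absurd hb haS
        · exact h3
      · intro h b hb
        simp only [FreeMonoid.toList_ofList]
        exact List.mem_cons_of_mem a (h b hb)
    erw [pre_single, flt_single, flt_single]
    by_cases hc : ContP S w
    · rw [if_pos hc, if_pos (hiff.mpr hc)]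
      exact (pre_single a w r).symm
    · rw [if_neg hc, if_neg (fun hcon => hc (hiff.mp hcon)), map_zero]

lemma main_exact : ∀ (m : ℕ) (S : Finset (Fin k)), (Finset.univ \ S).card = m →
    ∀ n, n < k → ∀ z ∈ sup (TS k n S), DS S z = 0 →
    ∃ C ∈ sup (TS k (n+1) S), DS S C = z := by
  intro m
  induction m with
  | zero =>
    intro S hS n hn z hz _
    have hSuniv : S = Finset.univ := by
      have h1 : Finset.univ \ S = ∅ := Finset.card_eq_zero.mp hS
      have h2 : (Finset.univ : Finset (Fin k)) ⊆ S := Finset.sdiff_eq_empty_iff_subset.mp h1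
      exact Finset.eq_univ_iff_forall.mpr (fun a => h2 (Finset.mem_univ a))
    subst hSuniv
    have hempty : TS k n Finset.univ = ∅ := by
      ext w
      simp only [TS, Set.mem_inter_iff, Set.mem_setOf_eq, Set.mem_empty_iff_false, iff_false,
        not_and]
      rintro ⟨hnd, hlen⟩ hcont
      have h3 : (Finset.univ : Finset (Fin k)).card ≤ (FreeMonoid.toList w).toFinset.card := by
        apply Finset.card_le_card
        intro b _
        exact List.mem_toFinset.mpr (hcont b (Finset.mem_univ b))
      rw [List.toFinset_card_of_nodup hnd, hlen, Finset.card_univ, Fintype.card_fin] at h3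
      omega
    have hz0 : z = 0 := by
      rw [hempty] at hz
      simpa [sup, Finsupp.supported_empty] using hz
    exact ⟨0, Submodule.zero_mem _, by rw [map_zero, hz0]⟩
  | succ m ih =>
    intro S hS n hn z hz hzc
    have hpos : 0 < (Finset.univ \ S).card := by rw [hS]; exact Nat.succ_pos m
    obtain ⟨a, ha⟩ := Finset.card_pos.mp hpos
    have haS : a ∉ S := (Finset.mem_sdiff.mp ha).2
    have hcard : (Finset.univ \ insert a S).card = m := by
      rw [Finset.sdiff_insert, Finset.card_erase_of_mem ha, hS, Nat.add_sub_cancel]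
    have hContS' : ∀ w : FreeMonoid (Fin k),
        ContP (insert a S) w ↔ (a ∈ FreeMonoid.toList w ∧ ContP S w) := by
      intro w
      constructor
      · intro h
        exact ⟨h a (Finset.mem_insert_self a S), fun b hb => h b (Finset.mem_insert_of_mem hb)⟩
      · rintro ⟨h1, h2⟩ b hb
        rcases Finset.mem_insert.mp hb with rfl | hb'
        · exact h1
        · exact h2 b hb'
    set ca : FreeMonoid (Fin k) → Prop := fun w => a ∈ FreeMonoid.toList w with hca
    have hy_mem : flt ca z ∈ sup (TS k n (insert a S)) := by
      refine Finsupp.supported_mono ?_ (flt_mem_inter ca hz)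
      rintro w ⟨⟨h2, h3⟩, h4⟩
      exact ⟨h2, (hContS' w).mpr ⟨h4, h3⟩⟩
    have hflt' : ∀ v : FA' k, flt (ContP (insert a S)) v = flt ca (flt (ContP S) v) := by
      intro v
      rw [flt_flt]
      have := flt_congr (k := k) (fun w => (hContS' w))
      rw [this]
    have hyc : DS (insert a S) (flt ca z) = 0 := by
      have h1 : Ddiff' k (flt ca z) = Ddiff' k z - Ddiff' k (flt (fun w => ¬ ca w) z) := by
        have h := congrArg (Ddiff' k) (flt_add_not ca z)
        rw [map_add] at h
        exact eq_sub_of_add_eq h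
      rw [DS_apply, h1, map_sub]
      have h2 : flt (ContP (insert a S)) (Ddiff' k z) = 0 := by
        rw [hflt']
        rw [DS_apply] at hzc
        rw [hzc, map_zero]
      have h3 : flt (ContP (insert a S)) (Ddiff' k (flt (fun w => ¬ ca w) z)) = 0 := by
        refine flt_zero_of (Ddiff_afree (flt_mem' _ z)) ?_
        intro w hw hcon
        exact hw ((hContS' w).mp hcon).1
      rw [h2, h3, sub_zero]
    obtain ⟨C, hC_mem, hC_eq⟩ := ih (insert a S) hcard n hn (flt ca z) hy_mem hyc
    have hC_memS : C ∈ sup (TS k (n+1) S) := by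
      refine Finsupp.supported_mono ?_ hC_mem
      rintro w ⟨h1, h2⟩
      exact ⟨h1, fun b hb => h2 b (Finset.mem_insert_of_mem hb)⟩
    have hDSC_mem : DS S C ∈ sup (TS k n S) := by
      rw [DS_apply]
      have h1 : Ddiff' k C ∈ sup (InjLen k n) :=
        Ddiff_mem (Finsupp.supported_mono Set.inter_subset_left hC_memS)
      exact Finsupp.supported_mono (fun w hw => hw) (flt_mem_inter (ContP S) h1)
    set z' := z - DS S C with hz'def
    have hz'_mem : z' ∈ sup (TS k n S) := Submodule.sub_mem _ hz hDSC_mem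
    have hz'_afree : flt ca z' = 0 := by
      rw [hz'def, map_sub]
      have h1 : flt ca (DS S C) = flt ca z := by
        rw [DS_apply, ← hflt']
        exact hC_eq
      rw [h1, sub_self]
    have hz'_freemem : z' ∈ sup {w | ¬ ca w} := by
      have h := flt_add_not ca z'
      rw [hz'_afree, zero_add] at h
      rw [← h]
      exact flt_mem' _ _
    have hz'c : DS S z' = 0 := by
      rw [hz'def, map_sub, hzc]
      rw [DS_DS]
      rw [sub_zero]
    have hz'_inter : z' ∈ sup (TS k n S ∩ {w | ¬ ca w}) := by
      rw [sup, Finsupp.mem_supported] at hz'_mem hz'_freemem ⊢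
      exact Set.subset_inter hz'_mem hz'_freemem
    have hpre_mem : pre a z' ∈ sup (TS k (n+1) S) := by
      refine supported_le_comap (pre a) ?_ z' hz'_inter
      rintro w ⟨⟨⟨hnd, hlen⟩, hcont⟩, hfree⟩
      rw [pre_single]
      apply Finsupp.single_mem_supported
      refine ⟨⟨?_, ?_⟩, ?_⟩
      · simp only [FreeMonoid.toList_ofList]
        exact List.nodup_cons.mpr ⟨hfree, hnd⟩
      · simp only [FreeMonoid.toList_ofList, List.length_cons, hlen]
      · intro b hb
        simp only [FreeMonoid.toList_ofList]
        exact List.mem_cons_of_mem a (hcont b hb)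
    have hDpre : DS S (pre a z') = z' := by
      rw [DS_apply, Ddiff_pre, map_sub]
      have h1 : flt (ContP S) z' = z' :=
        flt_id_of hz'_mem (fun w hw => hw.2)
      have h2 : flt (ContP S) (pre a (Ddiff' k z')) = 0 := by
        rw [flt_pre_comm haS]
        have h3 : flt (ContP S) (Ddiff' k z') = 0 := hz'c
        rw [h3, map_zero]
      rw [h1, h2, sub_zero]
    refine ⟨C + pre a z', Submodule.add_mem _ hC_memS hpre_mem, ?_⟩
    rw [map_add, hDpre, hz'def]
    abel

end InjWords4

namespace InjWords5

open InjWords InjWords2 InjWords3 InjWords4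

variable {k : ℕ}

lemma wordsLen_eq (n : ℕ) : wordsLen' k n = sup (InjLen k n) := by
  rw [wordsLen', sup, Finsupp.supported_eq_span_single]
  congr 1
  ext x
  constructor
  · rintro ⟨w, hnd, hlen, rfl⟩
    exact ⟨FreeMonoid.ofList w, ⟨by simpa using hnd, by simpa using hlen⟩, rfl⟩
  · rintro ⟨w, ⟨hnd, hlen⟩, rfl⟩
    exact ⟨FreeMonoid.toList w, hnd, hlen,
      by rw [wordElem_eq_single, FreeMonoid.ofList_toList]⟩

lemma exact_submodule (n : ℕ) (hn : n < k) :
    sup (InjLen k n) ⊓ LinearMap.ker (Ddiff' k)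
      = Submodule.map (Ddiff' k) (sup (InjLen k (n+1))) := by
  have hTS : ∀ m : ℕ, TS k m (∅ : Finset (Fin k)) = InjLen k m := by
    intro m
    ext w
    simp only [TS, Set.mem_inter_iff, Set.mem_setOf_eq, ContP, Finset.notMem_empty,
      false_implies, implies_true, and_true]
  have hDS : ∀ x : FA' k, DS (∅ : Finset (Fin k)) x = Ddiff' k x := by
    intro x
    rw [DS_apply]
    refine flt_id_of (s := Set.univ) ?_ ?_
    · rw [sup, Finsupp.supported_univ]; exact Submodule.mem_top
    · intro w _ b hb
      exact absurd hb (Finset.notMem_empty b)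
  apply le_antisymm
  · intro z hz
    obtain ⟨hz1, hz2⟩ := Submodule.mem_inf.mp hz
    obtain ⟨C, hC1, hC2⟩ := main_exact (k := k) _ ∅ rfl n hn z
      (by rw [hTS]; exact hz1) (by rw [hDS]; exact hz2)
    exact ⟨C, by rw [← hTS (n+1)]; exact hC1, by rw [← hDS]; exact hC2⟩
  · rintro _ ⟨x, hx, rfl⟩
    refine Submodule.mem_inf.mpr ⟨Ddiff_mem hx, ?_⟩
    rw [LinearMap.mem_ker]
    exact Ddiff_Ddiff x

def injEquiv (n : ℕ) : ↥(InjLen k n) ≃ (Fin n ↪ Fin k) where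
  toFun w := ⟨fun i => (FreeMonoid.toList w.1).get (Fin.cast w.2.2.symm i), by
    intro i j h
    have h2 := List.nodup_iff_injective_get.mp w.2.1 h
    exact Fin.cast_injective _ h2⟩
  invFun f := ⟨FreeMonoid.ofList (List.ofFn f), by
    constructor
    · simp only [FreeMonoid.toList_ofList]
      exact List.nodup_ofFn.mpr f.injective
    · simp⟩
  left_inv w := by
    apply Subtype.ext
    have h : List.ofFn (fun i => (FreeMonoid.toList w.1).get (Fin.cast w.2.2.symm i))
        = FreeMonoid.toList w.1 := by
      apply List.ext_getElem
      · simp [w.2.2]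
      · intro i h1 h2
        simp [List.getElem_ofFn]
    show FreeMonoid.ofList (List.ofFn fun i => (FreeMonoid.toList w.1).get (Fin.cast w.2.2.symm i)) = w.1
    rw [h, FreeMonoid.ofList_toList]
  right_inv f := by
    ext i
    simp [List.get_ofFn]
    rfl

noncomputable instance instFintypeInjLen (n : ℕ) : Fintype ↥(InjLen k n) :=
  Fintype.ofEquiv _ (injEquiv n).symm

lemma card_InjLen (n : ℕ) : Fintype.card ↥(InjLen k n) = Nat.descFactorial k n := by
  rw [Fintype.card_congr (injEquiv n), Fintype.card_embedding_eq, Fintype.card_fin,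
    Fintype.card_fin]

instance : NoZeroSMulDivisors ℤ (FA' k) := by
  refine ⟨fun {c x} h => ?_⟩
  by_cases hc : c = 0
  · exact Or.inl hc
  · refine Or.inr ?_
    apply Finsupp.ext
    intro w
    have h2 : (c • x) w = 0 := by rw [h]; rfl
    have h3 : c • (x w) = 0 := by
      rw [← h2]
      rfl
    rw [smul_eq_mul] at h3
    have := mul_eq_zero.mp h3
    simpa [hc] using this

instance instFiniteSup (n : ℕ) : Module.Finite ℤ ↥(sup (InjLen k n)) := by
  have e1 := Finsupp.supportedEquivFinsupp (M := ℤ) (R := ℤ) (InjLen k n)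
  have e2 := Finsupp.linearEquivFunOnFinite ℤ ℤ ↥(InjLen k n)
  exact Module.Finite.equiv (e1.trans e2).symm

lemma finrank_sup (n : ℕ) :
    Module.finrank ℤ ↥(sup (InjLen k n)) = Nat.descFactorial k n := by
  have e1 := Finsupp.supportedEquivFinsupp (M := ℤ) (R := ℤ) (InjLen k n)
  have h2 : Module.finrank ℤ ↥(Finsupp.supported ℤ ℤ (InjLen k n)) = Nat.descFactorial k n := by
    rw [LinearEquiv.finrank_eq e1, Module.finrank_finsupp, Module.finrank_self, mul_one,
      card_InjLen]
  exact h2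

lemma finite_of_le {n : ℕ} {p : Submodule ℤ (FA' k)} (h : p ≤ sup (InjLen k n)) :
    Module.Finite ℤ ↥p := by
  haveI : IsNoetherian ℤ ↥(sup (InjLen k n)) := isNoetherian_of_isNoetherianRing_of_finite ℤ _
  have e := Submodule.comapSubtypeEquivOfLe h
  haveI : Module.Finite ℤ ↥(Submodule.comap (sup (InjLen k n)).subtype p) :=
    Module.Finite.iff_fg.mpr (IsNoetherian.noetherian _)
  exact Module.Finite.equiv e

lemma free_sub {p : Submodule ℤ (FA' k)} [Module.Finite ℤ ↥p] : Module.Free ℤ ↥p := by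
  haveI : Module.IsTorsionFree ℤ ↥p := inferInstance
  exact Module.free_of_finite_type_torsion_free'

lemma rank_nullity_int (R : Type) [CommRing R] [IsDomain R] [IsPrincipalIdealRing R]
    [IsNoetherianRing R]
    {M N : Type} [AddCommGroup M] [Module R M] [AddCommGroup N] [Module R N]
    [Module.Finite R M] [Module.Free R M] [Module.IsTorsionFree R M] [Module.IsTorsionFree R N]
    (f : M →ₗ[R] N) :
    Module.finrank R M
      = Module.finrank R ↥(LinearMap.ker f) + Module.finrank R ↥(LinearMap.range f) := by
  haveI : Module.Finite R ↥(LinearMap.range f) := Module.Finite.range f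
  haveI : Module.IsTorsionFree R ↥(LinearMap.range f) := inferInstance
  haveI : Module.Free R ↥(LinearMap.range f) := Module.free_of_finite_type_torsion_free'
  haveI : IsNoetherian R M := isNoetherian_of_isNoetherianRing_of_finite R M
  haveI : Module.Finite R ↥(LinearMap.ker f) :=
    Module.Finite.iff_fg.mpr (IsNoetherian.noetherian _)
  haveI : Module.IsTorsionFree R ↥(LinearMap.ker f) := inferInstance
  haveI : Module.Free R ↥(LinearMap.ker f) := Module.free_of_finite_type_torsion_free'
  have h := LinearMap.rank_range_add_rank_ker f
  rw [← Module.finrank_eq_rank, ← Module.finrank_eq_rank, ← Module.finrank_eq_rank] at h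
  have h2 : Module.finrank R ↥(LinearMap.range f) + Module.finrank R ↥(LinearMap.ker f)
      = Module.finrank R M := by exact_mod_cast h
  omega

def Kn (k n : ℕ) : Submodule ℤ (FA' k) := sup (InjLen k n) ⊓ LinearMap.ker (Ddiff' k)

def fres (n : ℕ) : ↥(sup (InjLen k (n+1))) →ₗ[ℤ] FA' k :=
  (Ddiff' k) ∘ₗ (sup (InjLen k (n+1))).subtype

lemma rank_rec (n : ℕ) (hn : n < k) :
    Nat.descFactorial k (n+1)
      = Module.finrank ℤ ↥(Kn k (n+1)) + Module.finrank ℤ ↥(Kn k n) := by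
  haveI : Module.Free ℤ ↥(sup (InjLen k (n+1))) := free_sub
  have h := rank_nullity_int ℤ (fres (k := k) n)
  rw [finrank_sup] at h
  have hker : LinearMap.ker (fres (k := k) n)
      = Submodule.comap (sup (InjLen k (n+1))).subtype (LinearMap.ker (Ddiff' k)) :=
    LinearMap.ker_comp _ _
  have e1 := Submodule.equivMapOfInjective ((sup (InjLen k (n+1))).subtype)
    (Submodule.injective_subtype _)
    (Submodule.comap (sup (InjLen k (n+1))).subtype (LinearMap.ker (Ddiff' k)))
  have hmap : Submodule.map (sup (InjLen k (n+1))).subtype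
      (Submodule.comap (sup (InjLen k (n+1))).subtype (LinearMap.ker (Ddiff' k)))
      = Kn k (n+1) := by
    rw [Submodule.map_comap_subtype]
    rfl
  have hk1 : Module.finrank ℤ ↥(LinearMap.ker (fres (k := k) n))
      = Module.finrank ℤ ↥(Kn k (n+1)) := by
    rw [hker, LinearEquiv.finrank_eq e1, hmap]
  have hrange : LinearMap.range (fres (k := k) n) = Kn k n := by
    rw [fres, LinearMap.range_comp, Submodule.range_subtype]
    exact (exact_submodule n hn).symm
  rw [hk1, hrange] at h
  exact h

lemma Kn_zero : Module.finrank ℤ ↥(Kn k 0) = 1 := by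
  have h : Kn k 0 = sup (InjLen k 0) := by
    apply le_antisymm inf_le_left
    intro x hx
    refine Submodule.mem_inf.mpr ⟨hx, ?_⟩
    rw [LinearMap.mem_ker]
    have h2 : Ddiff' k x = (0 : FA' k →ₗ[ℤ] FA' k) x :=
      eq_on_supported _ _ (fun w hw => by
        rw [Ddiff_single_one]
        have h3 : FreeMonoid.toList w = [] := List.length_eq_zero_iff.mp hw.2
        rw [h3]
        show Dword' k [] = _
        simp [Dword']) x hx
    simpa using h2
  rw [h, finrank_sup]
  simp

lemma dI_sum : ∀ n, n ≤ k →
    (Module.finrank ℤ ↥(Kn k n) : ℤ)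
      = ∑ j ∈ Finset.range (n+1), (-1 : ℤ)^j * (Nat.descFactorial k (n-j) : ℤ) := by
  intro n
  induction n with
  | zero => intro _; simp [Kn_zero]
  | succ n ihn =>
    intro hnk
    have hrec := rank_rec (k := k) n (by omega)
    have h1 := ihn (by omega)
    have h2 : (Module.finrank ℤ ↥(Kn k (n+1)) : ℤ)
        = (Nat.descFactorial k (n+1) : ℤ) - (Module.finrank ℤ ↥(Kn k n) : ℤ) := by
      have h3 : ((Nat.descFactorial k (n+1) : ℕ) : ℤ)
          = (Module.finrank ℤ ↥(Kn k (n+1)) : ℤ) + (Module.finrank ℤ ↥(Kn k n) : ℤ) := by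
        exact_mod_cast congrArg (fun t : ℕ => (t : ℤ)) hrec
      linarith
    have h4 : ∀ j ∈ Finset.range (n+1),
        (-1:ℤ)^(j+1) * (Nat.descFactorial k ((n+1) - (j+1)) : ℤ)
          = -((-1:ℤ)^j * (Nat.descFactorial k (n-j) : ℤ)) := by
      intro j _
      rw [Nat.succ_sub_succ, pow_succ]
      ring
    rw [h2, h1,
      show ∑ j ∈ Finset.range (n+1+1), (-1:ℤ)^j * (Nat.descFactorial k (n+1-j) : ℤ)
        = ∑ j ∈ Finset.range (n+1), (-1:ℤ)^(j+1) * (Nat.descFactorial k ((n+1)-(j+1)) : ℤ)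
          + (-1:ℤ)^0 * (Nat.descFactorial k (n+1-0) : ℤ) from Finset.sum_range_succ' _ (n+1),
      Finset.sum_congr rfl h4, Finset.sum_neg_distrib]
    simp only [pow_zero, one_mul, Nat.sub_zero]
    ring

end InjWords5


open InjWords InjWords2 InjWords3 InjWords4 InjWords5 in
/-- The kernel of `D : C_{k-1}^{(k)} → C_{k-2}^{(k)}` (the top reduced homology of the
complex of injective words on `[k]`) is free abelian of rank `Σ_{j=0}^k (-1)^j k!/j!`,
which is the number of derangements of `[k]`. -/
theorem top_homology_rank_derangements (k : ℕ) (hk : 1 ≤ k) :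
    ∃ (d : ℕ) (_ : Module.Basis (Fin d) ℤ ↥(wordsLen ℤ k k ⊓ LinearMap.ker (Ddiff ℤ k))),
      (d : ℤ) = ∑ j ∈ Finset.range (k + 1),
          (-1 : ℤ) ^ j * ((Nat.factorial k / Nat.factorial j : ℕ) : ℤ) ∧
      d = Nat.card ↥(derangements (Fin k)) := by
  set e : FA ℤ k ≃ₗ[ℤ] FA' k := MonoidAlgebra.coeffLinearEquiv ℤ with he
  have hDw : ∀ l : List (Fin k), Dword ℤ k l = e.symm (Dword' k l) := by
    intro l
    simp only [Dword, Dword', map_sum, map_smul]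
    rfl
  have hL : (Finsupp.lsum ℤ fun w : FreeMonoid (Fin k) =>
      LinearMap.toSpanSingleton ℤ (FA ℤ k) (Dword ℤ k (FreeMonoid.toList w)))
      = (e.symm : FA' k →ₗ[ℤ] FA ℤ k) ∘ₗ Ddiff' k := by
    apply Finsupp.lhom_ext
    intro w r
    rw [LinearMap.comp_apply, Finsupp.lsum_single, LinearMap.toSpanSingleton_apply]
    erw [Ddiff_single]
    rw [map_smul, hDw]
    rfl
  have hD : Ddiff ℤ k = (e.symm : FA' k →ₗ[ℤ] FA ℤ k) ∘ₗ Ddiff' k ∘ₗ (e : FA ℤ k →ₗ[ℤ] FA' k) := by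
    rw [Ddiff, hL]
    rfl
  have hWL : wordsLen ℤ k k = (wordsLen' k k).map (e.symm : FA' k →ₗ[ℤ] FA ℤ k) := by
    rw [wordsLen, wordsLen', Submodule.map_span]
    congr 1
    ext x
    constructor
    · rintro ⟨w, h1, h2, rfl⟩
      exact ⟨wordElem' k w, ⟨w, h1, h2, rfl⟩, rfl⟩
    · rintro ⟨_, ⟨w, h1, h2, rfl⟩, rfl⟩
      exact ⟨w, h1, h2, rfl⟩
  have hwl : wordsLen ℤ k k ⊓ LinearMap.ker (Ddiff ℤ k)
      = (Kn k k).map (e.symm : FA' k →ₗ[ℤ] FA ℤ k) := by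
    ext x
    rw [Submodule.mem_map_equiv, Kn, Submodule.mem_inf, Submodule.mem_inf, LinearMap.mem_ker,
      LinearMap.mem_ker, hWL, Submodule.mem_map_equiv, hD, ← wordsLen_eq]
    simp
  haveI hfin : Module.Finite ℤ ↥(Kn k k) := finite_of_le (n := k) inf_le_left
  haveI hfree : Module.Free ℤ ↥(Kn k k) := free_sub
  have hterm : ∀ j ∈ Finset.range (k+1),
      (-1:ℤ)^j * (Nat.descFactorial k (k-j) : ℤ)
        = (-1:ℤ)^j * ((Nat.factorial k / Nat.factorial j : ℕ) : ℤ) := by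
    intro j hj
    have hj' : j ≤ k := by
      have := Finset.mem_range.mp hj; omega
    congr 2
    rw [Nat.descFactorial_eq_div (Nat.sub_le k j), Nat.sub_sub_self hj']
  have hsum : (Module.finrank ℤ ↥(Kn k k) : ℤ)
      = ∑ j ∈ Finset.range (k+1), (-1:ℤ)^j * ((Nat.factorial k / Nat.factorial j : ℕ) : ℤ) := by
    rw [dI_sum k le_rfl]
    exact Finset.sum_congr rfl hterm
  have hterm2 : ∀ j ∈ Finset.range (k+1),
      (-1:ℤ)^j * (Nat.descFactorial k (k-j) : ℤ)
        = (-1:ℤ)^j * (Nat.ascFactorial (j+1) (k-j) : ℤ) := by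
    intro j hj
    have hj' : j ≤ k := by
      have := Finset.mem_range.mp hj; omega
    congr 2
    have hjk : j + (k - j) = k := by omega
    rw [Nat.descFactorial_eq_div (Nat.sub_le k j), Nat.sub_sub_self hj',
      Nat.ascFactorial_eq_div, hjk]
  have hder : (Module.finrank ℤ ↥(Kn k k) : ℤ) = (numDerangements k : ℤ) := by
    rw [dI_sum k le_rfl, numDerangements_sum]
    exact Finset.sum_congr rfl hterm2
  refine ⟨Module.finrank ℤ ↥(Kn k k),
    (Module.finBasis ℤ ↥(Kn k k)).map
      ((e.symm.submoduleMap (Kn k k)).trans (LinearEquiv.ofEq _ _ hwl.symm)), hsum, ?_⟩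
  have h4 : Nat.card ↥(derangements (Fin k)) = numDerangements k := by
    rw [Nat.card_eq_fintype_card]
    exact card_derangements_fin_eq_numDerangements
  rw [h4]
  exact_mod_cast hder
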